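/- Limit λ → ∞ of the multivariate Rényi divergence along the path equals the max-divergence: lim_{λ→∞} D_{α^λ}(p⁰,…,p^d) = sup_{λ>1} D_{α^λ}(p⁰,…,p^d) = max_{x∈X} log( p⁰(x) / ∏_{k=1}^d pᵏ(x)^{γₖ} ). -/

import Mathlib

/-- Limit `λ → ∞` of the multivariate Rényi divergence along the path: it
converges to, and its supremum over `λ > 1` equals, the max-divergence
`maxₓ log(p⁰(x)/∏ₖ pᵏ(x)^{γₖ})`. -/
theorem multivariate_renyi_limit_at_top
    {X : Type*} [Fintype X] [Nonempty X] (d : ℕ)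
    (p0 : X → ℝ) (p : Fin d → X → ℝ) (γ : Fin d → ℝ)
    (hp0_pos : ∀ x, 0 < p0 x) (hp0_sum : ∑ x, p0 x = 1)
    (hp_pos : ∀ k x, 0 < p k x) (hp_sum : ∀ k, ∑ x, p k x = 1)
    (hγ_nonneg : ∀ k, 0 ≤ γ k) (hγ_sum : ∑ k, γ k = 1) :
    Filter.Tendsto
      (fun l : ℝ => (1 / (l - 1)) *
        Real.log (∑ x, (p0 x) ^ l * ∏ k, (p k x) ^ ((1 - l) * γ k)))
      Filter.atTop
      (nhds (Finset.univ.sup' Finset.univ_nonempty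
        (fun x => Real.log (p0 x / ∏ k, (p k x) ^ (γ k))))) ∧
    IsLUB
      {v : ℝ | ∃ l : ℝ, 1 < l ∧
        v = (1 / (l - 1)) *
          Real.log (∑ x, (p0 x) ^ l * ∏ k, (p k x) ^ ((1 - l) * γ k))}
      (Finset.univ.sup' Finset.univ_nonempty
        (fun x => Real.log (p0 x / ∏ k, (p k x) ^ (γ k)))) := by
  classical
  set r : X → ℝ := fun x => ∏ k, (p k x) ^ (γ k) with hr_def
  have hr_pos : ∀ x, 0 < r x := fun x =>
    Finset.prod_pos fun k _ => Real.rpow_pos_of_pos (hp_pos k x) _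
  set q : X → ℝ := fun x => p0 x / r x with hq_def
  have hq_pos : ∀ x, 0 < q x := fun x => div_pos (hp0_pos x) (hr_pos x)
  set c : X → ℝ := fun x => Real.log (p0 x / ∏ k, (p k x) ^ (γ k)) with hc_def
  set M : ℝ := Finset.univ.sup' Finset.univ_nonempty c with hM_def
  obtain ⟨x₀, -, hx₀'⟩ := Finset.exists_mem_eq_sup' Finset.univ_nonempty c
  have hx₀ : M = c x₀ := hx₀'
  have hcq : ∀ x, c x = Real.log (q x) := fun x => rfl
  have hle : ∀ x, c x ≤ M := fun x => Finset.le_sup' c (Finset.mem_univ x)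
  have hq_le : ∀ x, q x ≤ q x₀ := by
    intro x
    have h := hle x
    rw [hx₀, hcq, hcq] at h
    exact (Real.log_le_log_iff (hq_pos x) (hq_pos x₀)).mp h
  have hMq : Real.log (q x₀) = M := by rw [hx₀, hcq]
  -- key rewriting of the sum
  have key : ∀ l : ℝ, (∑ x, (p0 x) ^ l * ∏ k, (p k x) ^ ((1 - l) * γ k))
      = ∑ x, p0 x * (q x) ^ (l - 1) := by
    intro l
    refine Finset.sum_congr rfl fun x _ => ?_
    have h1 : (∏ k, (p k x) ^ ((1 - l) * γ k)) = (r x) ^ (1 - l) := by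
      rw [hr_def]
      rw [← Real.finset_prod_rpow _ _ (fun k _ => (Real.rpow_pos_of_pos (hp_pos k x) _).le) (1 - l)]
      exact Finset.prod_congr rfl fun k _ => by
        rw [← Real.rpow_mul (hp_pos k x).le, mul_comm]
    rw [h1, hq_def]
    have hp0x := hp0_pos x
    have hrx := hr_pos x
    have e1 : p0 x ^ l = p0 x ^ (1 : ℝ) * p0 x ^ (l - 1) := by
      rw [← Real.rpow_add hp0x]; congr 1; ring
    have e2 : r x ^ (1 - l) = (r x ^ (l - 1))⁻¹ := by
      rw [show (1 - l : ℝ) = -(l - 1) by ring, Real.rpow_neg hrx.le]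
    rw [e1, e2, Real.div_rpow hp0x.le hrx.le, Real.rpow_one]
    ring
  have S_pos : ∀ l : ℝ, 0 < ∑ x, p0 x * (q x) ^ (l - 1) := fun l =>
    Finset.sum_pos (fun x _ => mul_pos (hp0_pos x) (Real.rpow_pos_of_pos (hq_pos x) _))
      Finset.univ_nonempty
  -- upper bound
  have upper : ∀ l : ℝ, 1 < l →
      (1 / (l - 1)) * Real.log (∑ x, p0 x * (q x) ^ (l - 1)) ≤ M := by
    intro l hl
    have ht : (0 : ℝ) < l - 1 := by linarith
    have hsum : (∑ x, p0 x * (q x) ^ (l - 1)) ≤ (q x₀) ^ (l - 1) := by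
      calc (∑ x, p0 x * (q x) ^ (l - 1)) ≤ ∑ x, p0 x * (q x₀) ^ (l - 1) := by
            refine Finset.sum_le_sum fun x _ => ?_
            exact mul_le_mul_of_nonneg_left
              (Real.rpow_le_rpow (hq_pos x).le (hq_le x) ht.le) (hp0_pos x).le
        _ = (q x₀) ^ (l - 1) := by rw [← Finset.sum_mul, hp0_sum, one_mul]
    have hlog : Real.log (∑ x, p0 x * (q x) ^ (l - 1)) ≤ (l - 1) * M := by
      calc Real.log (∑ x, p0 x * (q x) ^ (l - 1))
          ≤ Real.log ((q x₀) ^ (l - 1)) := Real.log_le_log (S_pos l) hsum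
        _ = (l - 1) * Real.log (q x₀) := Real.log_rpow (hq_pos x₀) _
        _ = (l - 1) * M := by rw [hMq]
    calc (1 / (l - 1)) * Real.log (∑ x, p0 x * (q x) ^ (l - 1))
        ≤ (1 / (l - 1)) * ((l - 1) * M) := by
          exact mul_le_mul_of_nonneg_left hlog (by positivity)
      _ = M := by field_simp
  -- lower bound
  have lower : ∀ l : ℝ, 1 < l →
      M + Real.log (p0 x₀) * (1 / (l - 1))
        ≤ (1 / (l - 1)) * Real.log (∑ x, p0 x * (q x) ^ (l - 1)) := by
    intro l hl
    have ht : (0 : ℝ) < l - 1 := by linarith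
    have hterm : 0 < p0 x₀ * (q x₀) ^ (l - 1) :=
      mul_pos (hp0_pos x₀) (Real.rpow_pos_of_pos (hq_pos x₀) _)
    have hsum : p0 x₀ * (q x₀) ^ (l - 1) ≤ ∑ x, p0 x * (q x) ^ (l - 1) :=
      Finset.single_le_sum
        (fun x _ => (mul_pos (hp0_pos x) (Real.rpow_pos_of_pos (hq_pos x) _)).le)
        (Finset.mem_univ x₀)
    have hlog : Real.log (p0 x₀) + (l - 1) * M
        ≤ Real.log (∑ x, p0 x * (q x) ^ (l - 1)) := by
      have h := Real.log_le_log hterm hsum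
      rw [Real.log_mul (hp0_pos x₀).ne' (Real.rpow_pos_of_pos (hq_pos x₀) _).ne',
        Real.log_rpow (hq_pos x₀), hMq] at h
      exact h
    have h2 := mul_le_mul_of_nonneg_left hlog (le_of_lt (by positivity : (0:ℝ) < 1 / (l - 1)))
    calc M + Real.log (p0 x₀) * (1 / (l - 1))
        = (1 / (l - 1)) * (Real.log (p0 x₀) + (l - 1) * M) := by field_simp; ring
      _ ≤ _ := h2
  -- rewrite the function
  have hfun : (fun l : ℝ => (1 / (l - 1)) *
      Real.log (∑ x, (p0 x) ^ l * ∏ k, (p k x) ^ ((1 - l) * γ k)))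
      = fun l : ℝ => (1 / (l - 1)) * Real.log (∑ x, p0 x * (q x) ^ (l - 1)) :=
    funext fun l => by rw [key l]
  -- tendsto of the lower envelope
  have hinv : Filter.Tendsto (fun l : ℝ => 1 / (l - 1)) Filter.atTop (nhds 0) := by
    have h1 : Filter.Tendsto (fun l : ℝ => l - 1) Filter.atTop Filter.atTop :=
      Filter.tendsto_atTop_add_const_right _ (-1) Filter.tendsto_id
    simpa [one_div, Function.comp_def] using Filter.Tendsto.comp tendsto_inv_atTop_zero h1
  have hlow_tendsto : Filter.Tendsto
      (fun l : ℝ => M + Real.log (p0 x₀) * (1 / (l - 1))) Filter.atTop (nhds M) := by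
    have := Filter.Tendsto.add (tendsto_const_nhds (x := M) (f := Filter.atTop (α := ℝ)))
      (Filter.Tendsto.mul (tendsto_const_nhds (x := Real.log (p0 x₀))) hinv)
    simpa using this
  have htendsto : Filter.Tendsto
      (fun l : ℝ => (1 / (l - 1)) *
        Real.log (∑ x, (p0 x) ^ l * ∏ k, (p k x) ^ ((1 - l) * γ k)))
      Filter.atTop (nhds M) := by
    rw [hfun]
    refine tendsto_of_tendsto_of_tendsto_of_le_of_le' hlow_tendsto tendsto_const_nhds ?_ ?_
    · filter_upwards [Filter.eventually_gt_atTop (1 : ℝ)] with l hl using lower l hl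
    · filter_upwards [Filter.eventually_gt_atTop (1 : ℝ)] with l hl using upper l hl
  refine ⟨htendsto, ?_, ?_⟩
  · rintro v ⟨l, hl, rfl⟩
    rw [key l]
    exact upper l hl
  · intro b hb
    refine le_of_tendsto htendsto ?_
    filter_upwards [Filter.eventually_gt_atTop (1 : ℝ)] with l hl
    exact hb ⟨l, hl, rfl⟩
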